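/- The set Z = {κ ∈ ℝ^m_{>0} : ∃ x ∈ ℝ^n_{>0}, C(κ ∘ x^M) = 0} is a connected subset of ℝ^m. -/
import Mathlib

open Matrix

/-- The vector of Laurent monomials with exponent vectors the columns of `M`. -/
noncomputable def monR {n m : ℕ} (M : Matrix (Fin n) (Fin m) ℤ) (h : Fin n → ℝ) :
    Fin m → ℝ :=
  fun j => ∏ i, h i ^ (M i j)

lemma monR_pos {n m : ℕ} (M : Matrix (Fin n) (Fin m) ℤ) {x : Fin n → ℝ}
    (hx : ∀ i, 0 < x i) (j : Fin m) : 0 < monR M x j :=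
  Finset.prod_pos fun i _ => zpow_pos (hx i) _

lemma monR_mul_neg {n m : ℕ} (M : Matrix (Fin n) (Fin m) ℤ) {x : Fin n → ℝ}
    (hx : ∀ i, 0 < x i) : monR M x * monR (-M) x = 1 := by
  funext j
  simp only [Pi.mul_apply, Pi.one_apply, monR, ← Finset.prod_mul_distrib]
  rw [Finset.prod_eq_one]
  intro i _
  rw [Matrix.neg_apply, _root_.zpow_neg, mul_inv_cancel₀ (zpow_ne_zero _ (hx i).ne')]

/-- The set Z of positive parameters admitting a positive steady state is a connected
subset of ℝ^m. -/
theorem Z_isPreconnected {s m n : ℕ}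
    (C : Matrix (Fin s) (Fin m) ℝ) (M : Matrix (Fin n) (Fin m) ℤ) :
    IsPreconnected {κ : Fin m → ℝ | (∀ j, 0 < κ j) ∧
      ∃ x : Fin n → ℝ, (∀ i, 0 < x i) ∧ C *ᵥ (κ * monR M x) = 0} := by
  set K : Set (Fin m → ℝ) := {w | (∀ j, 0 < w j) ∧ C *ᵥ w = 0} with hK
  set P : Set (Fin n → ℝ) := {x | ∀ i, 0 < x i} with hP
  have hKconv : Convex ℝ K := by
    intro a ha b hb t u ht hu htu
    constructor
    · intro j
      rcases ht.eq_or_lt with rfl | h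
      · have hu1 : u = 1 := by linarith
        subst hu1; simpa using hb.1 j
      · have := add_pos_of_pos_of_nonneg (mul_pos h (ha.1 j))
          (mul_nonneg hu (hb.1 j).le)
        simpa using this
    · have : C *ᵥ (t • a + u • b) = t • (C *ᵥ a) + u • (C *ᵥ b) := by
        rw [Matrix.mulVec_add, Matrix.mulVec_smul, Matrix.mulVec_smul]
      rw [this, ha.2, hb.2]; simp
  have hPconv : Convex ℝ P := by
    intro a ha b hb t u ht hu htu i
    rcases ht.eq_or_lt with rfl | h
    · have hu1 : u = 1 := by linarith
      subst hu1; simpa using hb i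
    · have := add_pos_of_pos_of_nonneg (mul_pos h (ha i)) (mul_nonneg hu (hb i).le)
      simpa using this
  have hS : IsPreconnected (K ×ˢ P) :=
    (hKconv.isPreconnected).prod (hPconv.isPreconnected)
  have hmap : ContinuousOn (fun p : (Fin m → ℝ) × (Fin n → ℝ) =>
      p.1 * monR (-M) p.2) (K ×ˢ P) := by
    apply continuousOn_pi.2
    intro j
    have h1 : ContinuousOn (fun p : (Fin m → ℝ) × (Fin n → ℝ) => p.1 j) (K ×ˢ P) :=
      ((continuous_apply j).comp continuous_fst).continuousOn
    refine h1.mul ?_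
    simp only [monR]
    refine continuousOn_finset_prod _ fun i _ => ?_
    have hz : ContinuousOn (fun y : ℝ => y ^ ((-M) i j)) {0}ᶜ :=
      continuousOn_zpow₀ _
    refine hz.comp (((continuous_apply i).comp continuous_snd).continuousOn) ?_
    intro p hp
    exact (hp.2 i).ne'
  have himg : {κ : Fin m → ℝ | (∀ j, 0 < κ j) ∧
      ∃ x : Fin n → ℝ, (∀ i, 0 < x i) ∧ C *ᵥ (κ * monR M x) = 0} =
      (fun p : (Fin m → ℝ) × (Fin n → ℝ) => p.1 * monR (-M) p.2) '' (K ×ˢ P) := by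
    ext κ
    constructor
    · rintro ⟨hκ, x, hx, hCx⟩
      refine ⟨(κ * monR M x, x), ⟨⟨fun j => mul_pos (hκ j) (monR_pos M hx j), hCx⟩, hx⟩, ?_⟩
      simp only
      rw [mul_assoc, monR_mul_neg M hx, mul_one]
    · rintro ⟨⟨w, x⟩, ⟨⟨hw, hCw⟩, hx⟩, rfl⟩
      refine ⟨fun j => mul_pos (hw j) (monR_pos (-M) hx j), x, hx, ?_⟩
      rw [mul_assoc]
      rw [show monR (-M) x * monR M x = 1 by
        rw [mul_comm]; exact monR_mul_neg M hx]
      rw [mul_one, hCw]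
  rw [himg]
  exact hS.image _ hmap
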